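/- Let A₁ be a unipotent ℤ^p-action on ℚ^{q₁} and A₂ a ℤ^p-action on ℚ^{q₂} such that 0 is the only vector fixed by all A₂(ℓ). Let V : ℤ^p → Hom(ℚ^{q₁},ℚ^{q₂}) satisfy V(ℓ+ℓ') = V(ℓ)∘A₁(ℓ') + A₂(ℓ)∘V(ℓ'). Then there exists W₀ ∈ Hom(ℚ^{q₁},ℚ^{q₂}) such that V(ℓ) = W₀∘A₁(ℓ) − A₂(ℓ)∘W₀ for all ℓ ∈ ℤ^p. -/

import Mathlib

open Module LinearMap

/-- A property of `ℤ^p` closed under 0, addition, negation, and holding on generators,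
holds everywhere. -/
lemma gen_prop {p : ℕ} (P : (Fin p → ℤ) → Prop) (h0 : P 0)
    (hadd : ∀ ℓ ℓ', P ℓ → P ℓ' → P (ℓ + ℓ'))
    (hneg : ∀ ℓ, P ℓ → P (-ℓ))
    (hgen : ∀ i, P (Pi.single i 1)) : ∀ ℓ, P ℓ := by
  have hsingle : ∀ (i : Fin p) (n : ℤ), P (Pi.single i n) := by
    intro i n
    induction n using Int.induction_on with
    | zero => rw [Pi.single_zero]; exact h0
    | succ k ih =>
        rw [Pi.single_add]
        exact hadd _ _ ih (hgen i)
    | pred k ih =>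
        rw [sub_eq_add_neg, Pi.single_add, Pi.single_neg, Pi.single_neg]
        rw [Pi.single_neg] at ih
        exact hadd _ _ ih (hneg _ (hgen i))
  intro ℓ
  have : ℓ = ∑ i, Pi.single i (ℓ i) := (Finset.univ_sum_single ℓ).symm
  rw [this]
  refine Finset.sum_induction _ P (fun a b ha hb => hadd a b ha hb) h0 ?_
  intro i _
  exact hsingle i (ℓ i)

lemma restrict_pow_coe {V : Type*} [AddCommGroup V] [Module ℚ V]
    (f : Module.End ℚ V) (U : Submodule ℚ V) (h : ∀ x ∈ U, f x ∈ U) (k : ℕ) (x : U) :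
    ((f.restrict h ^ k) x : V) = (f ^ k) (x : V) := by
  induction k generalizing x with
  | zero => simp
  | succ k ih =>
      rw [pow_succ, pow_succ]
      simp only [Module.End.mul_apply]
      rw [ih, LinearMap.restrict_coe_apply]

lemma pow_apply_eq_zero_of_ker_bot {V : Type*} [AddCommGroup V] [Module ℚ V]
    (f : Module.End ℚ V) (hf : LinearMap.ker f = ⊥) (k : ℕ) (v : V)
    (h : (f ^ k) v = 0) : v = 0 := by
  induction k generalizing v with
  | zero => simpa using h
  | succ k ih =>
      rw [pow_succ, Module.End.mul_apply] at h
      exact LinearMap.ker_eq_bot'.mp hf v (ih (f v) h)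

lemma common_ker_of_nilpotent : ∀ (n : ℕ) (V : Type) [AddCommGroup V] [Module ℚ V],
    Nontrivial V → ∀ (d : Fin n → Module.End ℚ V),
    (∀ i j, d i * d j = d j * d i) → (∀ i, IsNilpotent (d i)) →
    ∃ v : V, v ≠ 0 ∧ ∀ i, d i v = 0 := by
  intro n
  induction n with
  | zero =>
      intro V _ _ hV d _ _
      obtain ⟨v, hv⟩ := exists_ne (0 : V)
      exact ⟨v, hv, fun i => i.elim0⟩
  | succ n ih =>
      intro V _ _ hV d hcomm hnil
      set f := d (Fin.last n) with hf
      have hkf : LinearMap.ker f ≠ ⊥ := by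
        intro hbot
        obtain ⟨k, hk⟩ := hnil (Fin.last n)
        obtain ⟨v, hv⟩ := exists_ne (0 : V)
        refine hv (pow_apply_eq_zero_of_ker_bot f hbot k v ?_)
        rw [hk]; rfl
      have hinv : ∀ (i : Fin n), ∀ x ∈ LinearMap.ker f, d i.castSucc x ∈ LinearMap.ker f := by
        intro i x hx
        have := LinearMap.congr_fun (hcomm (Fin.last n) i.castSucc) x
        simp only [Module.End.mul_apply] at this
        simp only [LinearMap.mem_ker] at hx ⊢
        rw [this, hx, map_zero]
      set d' : Fin n → Module.End ℚ (LinearMap.ker f) :=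
        fun i => (d i.castSucc).restrict (hinv i) with hd'
      have hU : Nontrivial (LinearMap.ker f) := Submodule.nontrivial_iff_ne_bot.mpr hkf
      have hcomm' : ∀ i j, d' i * d' j = d' j * d' i := by
        intro i j
        ext x
        simp only [Module.End.mul_apply, hd', LinearMap.restrict_coe_apply]
        exact LinearMap.congr_fun (hcomm i.castSucc j.castSucc) (x : V) |>.symm ▸
          (by simpa [Module.End.mul_apply] using
            LinearMap.congr_fun (hcomm i.castSucc j.castSucc) (x : V))
      have hnil' : ∀ i, IsNilpotent (d' i) := by
        intro i
        obtain ⟨k, hk⟩ := hnil i.castSucc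
        refine ⟨k, ?_⟩
        ext x
        rw [hd']
        rw [restrict_pow_coe, hk]
        rfl
      obtain ⟨v, hv0, hvk⟩ := ih (LinearMap.ker f) hU d' hcomm' hnil'
      refine ⟨(v : V), by simpa using hv0, ?_⟩
      intro i
      induction i using Fin.lastCases with
      | last => exact v.2
      | cast i =>
          have := hvk i
          have h2 : ((d' i v : LinearMap.ker f) : V) = 0 := by rw [this]; rfl
          rw [hd'] at h2
          rwa [LinearMap.restrict_coe_apply] at h2

lemma proj_comm {V : Type*} [AddCommGroup V] [Module ℚ V] {K I : Submodule ℚ V}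
    (h : IsCompl K I) (g : Module.End ℚ V)
    (hK : ∀ x ∈ K, g x ∈ K) (hI : ∀ x ∈ I, g x ∈ I) (v : V) :
    ((K.projectionOnto I h (g v) : K) : V) = g ((K.projectionOnto I h v : K) : V) := by
  set prK := K.projectionOnto I h with hprK
  set prI := I.projectionOnto K h.symm with hprI
  have hv : ((prK v : K) : V) + ((prI v : I) : V) = v :=
    Submodule.projection_add_projection_eq_self h v
  have hgv : g v = g ((prK v : K) : V) + g ((prI v : I) : V) := by
    rw [← map_add, hv]
  have h1 : prK (g ((prK v : K) : V)) = ⟨g ((prK v : K) : V), hK _ (prK v).2⟩ := by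
    have := Submodule.projectionOnto_apply_left h (⟨g ((prK v : K) : V), hK _ (prK v).2⟩ : K)
    exact this
  have h2 : prK (g ((prI v : I) : V)) = 0 :=
    Submodule.projectionOnto_apply_of_mem_right h (hI _ (prI v).2)
  rw [hgv, map_add, h1, h2, add_zero]

lemma koszul1 : ∀ (N : ℕ) (V : Type) [AddCommGroup V] [Module ℚ V] [FiniteDimensional ℚ V],
    Module.finrank ℚ V ≤ N → ∀ {n : ℕ} (d : Fin n → Module.End ℚ V),
    (∀ i j, d i * d j = d j * d i) →
    (∀ v : V, (∀ i, d i v = 0) → v = 0) →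
    ∀ (c : Fin n → V), (∀ i j, d i (c j) = d j (c i)) →
    ∃ w : V, ∀ i, c i = d i w := by
  intro N
  induction N with
  | zero =>
      intro V _ _ _ hr n d hcomm hker c hc
      have : Module.finrank ℚ V = 0 := Nat.le_zero.mp hr
      have hsub : Subsingleton V := by
        rw [Module.finrank_zero_iff] at this; exact this
      exact ⟨0, fun i => Subsingleton.elim _ _⟩
  | succ N ih =>
      intro V _ _ _ hr n d hcomm hker c hc
      by_cases htriv : Subsingleton V
      · exact ⟨0, fun i => Subsingleton.elim _ _⟩
      have hnt : Nontrivial V := not_subsingleton_iff_nontrivial.mp htriv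
      by_cases hinj : ∃ i, LinearMap.ker (d i) = ⊥
      · -- some d i injective, hence bijective
        obtain ⟨i, hi⟩ := hinj
        have hdi : Function.Injective (d i) := LinearMap.ker_eq_bot.mp hi
        have hsurj : Function.Surjective (d i) :=
          (LinearMap.injective_iff_surjective_of_finrank_eq_finrank rfl).mp hdi
        obtain ⟨w, hw⟩ := hsurj (c i)
        refine ⟨w, fun j => ?_⟩
        apply hdi
        calc d i (c j) = d j (c i) := hc i j
          _ = d j (d i w) := by rw [hw]
          _ = d i (d j w) := by
              have := LinearMap.congr_fun (hcomm j i) w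
              simpa [Module.End.mul_apply] using this
      · -- all d i have nontrivial kernel
        push_neg at hinj
        by_cases hnilall : ∀ i, IsNilpotent (d i)
        · obtain ⟨v, hv0, hvk⟩ := common_ker_of_nilpotent n V hnt d hcomm hnilall
          exact absurd (hker v hvk) hv0
        push_neg at hnilall
        obtain ⟨i, hni⟩ := hnilall
        set f := d i with hfdef
        -- Fitting decomposition
        obtain ⟨m₀, hm₀⟩ := Filter.eventually_atTop.mp (f.eventually_isCompl_ker_pow_range_pow)
        set m := m₀ + 1 with hm
        have hcompl : IsCompl (LinearMap.ker (f ^ m)) (LinearMap.range (f ^ m)) :=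
          hm₀ m (Nat.le_succ m₀)
        set K := LinearMap.ker (f ^ m) with hKdef
        set I := LinearMap.range (f ^ m) with hIdef
        have hK0 : K ≠ ⊥ := by
          intro hbot
          apply hinj i
          rw [eq_bot_iff] at hbot ⊢
          intro x hx
          apply hbot
          show (f ^ (m₀ + 1)) x = 0
          have hfx : f x = 0 := hx
          rw [pow_succ, Module.End.mul_apply, hfx, map_zero]
        have hI0 : I ≠ ⊥ := by
          intro hbot
          exact hni ⟨m, LinearMap.range_eq_bot.mp hbot⟩
        -- invariance
        have hcommpow : ∀ j, d j * f ^ m = f ^ m * d j := fun j =>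
          ((Commute.pow_right (hcomm j i) m))
        have hKinv : ∀ j, ∀ x ∈ K, d j x ∈ K := by
          intro j x hx
          simp only [hKdef, LinearMap.mem_ker] at hx ⊢
          have := LinearMap.congr_fun (hcommpow j) x
          simp only [Module.End.mul_apply] at this
          rw [← this, hx, map_zero]
        have hIinv : ∀ j, ∀ x ∈ I, d j x ∈ I := by
          intro j x hx
          simp only [hIdef, LinearMap.mem_range] at hx ⊢
          obtain ⟨y, hy⟩ := hx
          refine ⟨d j y, ?_⟩
          have := LinearMap.congr_fun (hcommpow j) y
          simp only [Module.End.mul_apply] at this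
          rw [← this, hy]
        -- dimensions
        have hrkK : Module.finrank ℚ K ≤ N := by
          have hsum := Submodule.finrank_add_eq_of_isCompl hcompl
          have hIpos : 0 < Module.finrank ℚ I := by
            rcases Nat.eq_zero_or_pos (Module.finrank ℚ I) with h0 | h
            · exact absurd (Submodule.finrank_eq_zero.mp h0) hI0
            · exact h
          omega
        have hrkI : Module.finrank ℚ I ≤ N := by
          have hsum := Submodule.finrank_add_eq_of_isCompl hcompl
          have hKpos : 0 < Module.finrank ℚ K := by
            rcases Nat.eq_zero_or_pos (Module.finrank ℚ K) with h0 | h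
            · exact absurd (Submodule.finrank_eq_zero.mp h0) hK0
            · exact h
          omega
        -- restricted systems
        set prK := K.projectionOnto I hcompl with hprK
        set prI := I.projectionOnto K hcompl.symm with hprI
        set dK : Fin n → Module.End ℚ K := fun j => (d j).restrict (hKinv j) with hdK
        set dI : Fin n → Module.End ℚ I := fun j => (d j).restrict (hIinv j) with hdI
        have hprKcomm : ∀ j v, ((prK ((d j) v) : K) : V) = d j ((prK v : K) : V) :=
          fun j v => proj_comm hcompl (d j) (hKinv j) (hIinv j) v
        have hprIcomm : ∀ j v, ((prI ((d j) v) : I) : V) = d j ((prI v : I) : V) :=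
          fun j v => proj_comm hcompl.symm (d j) (hIinv j) (hKinv j) v
        have hcommK : ∀ a b, dK a * dK b = dK b * dK a := by
          intro a b; ext x
          simp only [Module.End.mul_apply, hdK, LinearMap.restrict_coe_apply]
          have := LinearMap.congr_fun (hcomm a b) (x : V)
          simpa [Module.End.mul_apply] using this
        have hcommI : ∀ a b, dI a * dI b = dI b * dI a := by
          intro a b; ext x
          simp only [Module.End.mul_apply, hdI, LinearMap.restrict_coe_apply]
          have := LinearMap.congr_fun (hcomm a b) (x : V)
          simpa [Module.End.mul_apply] using this
        have hkerK : ∀ u : K, (∀ j, dK j u = 0) → u = 0 := by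
          intro u hu
          have : ∀ j, d j (u : V) = 0 := by
            intro j
            have := congrArg (Subtype.val) (hu j)
            simpa [hdK, LinearMap.restrict_coe_apply] using this
          exact Subtype.ext (by simpa using hker (u : V) this)
        have hkerI : ∀ u : I, (∀ j, dI j u = 0) → u = 0 := by
          intro u hu
          have : ∀ j, d j (u : V) = 0 := by
            intro j
            have := congrArg (Subtype.val) (hu j)
            simpa [hdI, LinearMap.restrict_coe_apply] using this
          exact Subtype.ext (by simpa using hker (u : V) this)
        set cK : Fin n → K := fun j => prK (c j) with hcK
        set cI : Fin n → I := fun j => prI (c j) with hcI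
        have hcKrel : ∀ a b, dK a (cK b) = dK b (cK a) := by
          intro a b
          refine Subtype.ext ?_
          rw [hdK]
          simp only [LinearMap.restrict_coe_apply]
          rw [hcK]
          simp only
          rw [← hprKcomm a (c b), ← hprKcomm b (c a), hc a b]
        have hcIrel : ∀ a b, dI a (cI b) = dI b (cI a) := by
          intro a b
          refine Subtype.ext ?_
          rw [hdI]
          simp only [LinearMap.restrict_coe_apply]
          rw [hcI]
          simp only
          rw [← hprIcomm a (c b), ← hprIcomm b (c a), hc a b]
        obtain ⟨wK, hwK⟩ := ih K hrkK dK hcommK hkerK cK hcKrel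
        obtain ⟨wI, hwI⟩ := ih I hrkI dI hcommI hkerI cI hcIrel
        refine ⟨(wK : V) + (wI : V), fun j => ?_⟩
        have hsplit : ((cK j : K) : V) + ((cI j : I) : V) = c j :=
          Submodule.projection_add_projection_eq_self hcompl (c j)
        rw [← hsplit, hwK j, hwI j, map_add]
        congr 1
        all_goals exact LinearMap.restrict_coe_apply _ _ _

lemma comm_sq_pow {X Q : Type*} [AddCommGroup X] [Module ℚ X] [AddCommGroup Q] [Module ℚ Q]
    (π : X →ₗ[ℚ] Q) (a : Module.End ℚ X) (b : Module.End ℚ Q)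
    (h : (b : Q →ₗ[ℚ] Q) ∘ₗ π = π ∘ₗ (a : X →ₗ[ℚ] X)) (k : ℕ) :
    ((b ^ k : Module.End ℚ Q) : Q →ₗ[ℚ] Q) ∘ₗ π = π ∘ₗ ((a ^ k : Module.End ℚ X) : X →ₗ[ℚ] X) := by
  induction k with
  | zero => simp [Module.End.one_eq_id]
  | succ k ih =>
      rw [pow_succ, pow_succ]
      rw [Module.End.mul_eq_comp, Module.End.mul_eq_comp]
      rw [LinearMap.comp_assoc, h, ← LinearMap.comp_assoc, ih, LinearMap.comp_assoc]

lemma intertwiner_zero : ∀ (N : ℕ) (X : Type) [AddCommGroup X] [Module ℚ X]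
    [FiniteDimensional ℚ X], Module.finrank ℚ X ≤ N →
    ∀ {Y : Type} [AddCommGroup Y] [Module ℚ Y] {m : ℕ}
    (g : Fin m → Module.End ℚ Y),
    (∀ y : Y, (∀ i, g i y = y) → y = 0) →
    ∀ (B : Fin m → Module.End ℚ X),
    (∀ i j, B i * B j = B j * B i) → (∀ i, IsNilpotent (B i - 1)) →
    ∀ (W : X →ₗ[ℚ] Y), (∀ i, W ∘ₗ (B i : X →ₗ[ℚ] X) = (g i : Y →ₗ[ℚ] Y) ∘ₗ W) → W = 0 := by
  intro N
  induction N with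
  | zero =>
      intro X _ _ _ hr Y _ _ m g hg B hBc hBn W hW
      have hr0 : Module.finrank ℚ X = 0 := by omega
      have hsub : Subsingleton X := Module.finrank_zero_iff.mp hr0
      ext x
      rw [Subsingleton.elim x 0]
      simp
  | succ N ih =>
      intro X _ _ _ hr Y _ _ m g hg B hBc hBn W hW
      by_cases htriv : Subsingleton X
      · ext x; rw [Subsingleton.elim x 0]; simp
      have hnt : Nontrivial X := not_subsingleton_iff_nontrivial.mp htriv
      set dB : Fin m → Module.End ℚ X := fun i => B i - 1 with hdB
      have hdBc : ∀ i j, dB i * dB j = dB j * dB i := by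
        intro i j
        have h1 : (B i - 1) * (B j - 1) = B i * B j - B i - B j + 1 := by noncomm_ring
        have h2 : (B j - 1) * (B i - 1) = B j * B i - B j - B i + 1 := by noncomm_ring
        rw [hdB]
        simp only
        rw [h1, h2, hBc i j]
        abel
      obtain ⟨v, hv0, hvk⟩ := common_ker_of_nilpotent m X hnt dB hdBc hBn
      set F₀ : Submodule ℚ X := ⨅ i, LinearMap.ker (B i - 1) with hF₀
      have hvF : v ∈ F₀ := by
        rw [hF₀, Submodule.mem_iInf]
        intro i
        exact hvk i
      have hF0ne : F₀ ≠ ⊥ := by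
        intro hbot
        rw [hbot] at hvF
        exact hv0 (Submodule.mem_bot ℚ |>.mp hvF)
      -- members of F₀ are fixed by all B i
      have hfixB : ∀ x ∈ F₀, ∀ i, B i x = x := by
        intro x hx i
        rw [hF₀, Submodule.mem_iInf] at hx
        have := hx i
        rw [LinearMap.mem_ker, LinearMap.sub_apply, Module.End.one_apply, sub_eq_zero] at this
        exact this
      -- W vanishes on F₀
      have hWF : F₀ ≤ LinearMap.ker W := by
        intro x hx
        rw [LinearMap.mem_ker]
        apply hg
        intro i
        have := LinearMap.congr_fun (hW i) x
        simp only [LinearMap.comp_apply] at this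
        rw [← this, hfixB x hx i]
      -- F₀ invariant under B i
      have hBinv : ∀ i, F₀ ≤ F₀.comap (B i) := by
        intro i x hx
        rw [Submodule.mem_comap]
        rw [hF₀, Submodule.mem_iInf] at hx ⊢
        intro j
        rw [LinearMap.mem_ker, LinearMap.sub_apply, Module.End.one_apply, sub_eq_zero]
        have hxj : B j x = x := by
          have := hx j
          rwa [LinearMap.mem_ker, LinearMap.sub_apply, Module.End.one_apply, sub_eq_zero] at this
        have hxi : B i x = x := by
          have := hx i
          rwa [LinearMap.mem_ker, LinearMap.sub_apply, Module.End.one_apply, sub_eq_zero] at this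
        calc B j (B i x) = (B j * B i) x := rfl
          _ = (B i * B j) x := by rw [hBc i j]
          _ = B i (B j x) := rfl
          _ = B i x := by rw [hxj]
      set π := F₀.mkQ with hπ
      have hπs : Function.Surjective π := Submodule.mkQ_surjective F₀
      set B' : Fin m → Module.End ℚ (X ⧸ F₀) := fun i => Submodule.mapQ F₀ F₀ (B i) (hBinv i) with hB'
      have hkey : ∀ i, (B' i : (X ⧸ F₀) →ₗ[ℚ] (X ⧸ F₀)) ∘ₗ π = π ∘ₗ (B i : X →ₗ[ℚ] X) := by
        intro i
        ext x
        rfl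
      -- rank
      have hrk : Module.finrank ℚ (X ⧸ F₀) ≤ N := by
        have := Submodule.finrank_quotient_add_finrank F₀
        have hpos : 0 < Module.finrank ℚ F₀ := by
          rcases Nat.eq_zero_or_pos (Module.finrank ℚ F₀) with h0 | h
          · exact absurd (Submodule.finrank_eq_zero.mp h0) hF0ne
          · exact h
        omega
      have hB'c : ∀ i j, B' i * B' j = B' j * B' i := by
        intro i j
        rw [← LinearMap.cancel_right hπs]
        calc (B' i * B' j) ∘ₗ π
            = B' i ∘ₗ (B' j ∘ₗ π) := by rw [Module.End.mul_eq_comp, LinearMap.comp_assoc]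
          _ = B' i ∘ₗ (π ∘ₗ B j) := by rw [hkey j]
          _ = (B' i ∘ₗ π) ∘ₗ B j := by rw [LinearMap.comp_assoc]
          _ = (π ∘ₗ B i) ∘ₗ B j := by rw [hkey i]
          _ = π ∘ₗ (B i * B j) := by rw [Module.End.mul_eq_comp, LinearMap.comp_assoc]
          _ = π ∘ₗ (B j * B i) := by rw [hBc i j]
          _ = (π ∘ₗ B j) ∘ₗ B i := by rw [Module.End.mul_eq_comp, ← LinearMap.comp_assoc]
          _ = (B' j ∘ₗ π) ∘ₗ B i := by rw [hkey j]
          _ = (B' j * B' i) ∘ₗ π := by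
              rw [LinearMap.comp_assoc, ← hkey i, ← LinearMap.comp_assoc, ← Module.End.mul_eq_comp]
      have hB'n : ∀ i, IsNilpotent (B' i - 1) := by
        intro i
        obtain ⟨k, hk⟩ := hBn i
        refine ⟨k, ?_⟩
        have hsub : ((B' i - 1 : Module.End ℚ (X ⧸ F₀)) : (X ⧸ F₀) →ₗ[ℚ] (X ⧸ F₀)) ∘ₗ π
            = π ∘ₗ ((B i - 1 : Module.End ℚ X) : X →ₗ[ℚ] X) := by
          simp only [LinearMap.sub_comp, LinearMap.comp_sub]
          rw [hkey i]
          congr 1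
        have := comm_sq_pow π (B i - 1) (B' i - 1) hsub k
        rw [hk] at this
        simp only [LinearMap.zero_comp, LinearMap.comp_zero] at this
        rw [← LinearMap.cancel_right hπs]
        rw [this]
        simp
      set W' : (X ⧸ F₀) →ₗ[ℚ] Y := F₀.liftQ W hWF with hW'def
      have hW'mk : W' ∘ₗ π = W := Submodule.liftQ_mkQ F₀ W hWF
      have hW'int : ∀ i, W' ∘ₗ (B' i : (X ⧸ F₀) →ₗ[ℚ] (X ⧸ F₀)) = (g i : Y →ₗ[ℚ] Y) ∘ₗ W' := by
        intro i
        rw [← LinearMap.cancel_right hπs]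
        rw [LinearMap.comp_assoc, hkey i, ← LinearMap.comp_assoc, hW'mk, hW i,
          LinearMap.comp_assoc, hW'mk]
      have hW'0 : W' = 0 := ih (X ⧸ F₀) hrk g hg B' hB'c hB'n W' hW'int
      rw [← hW'mk, hW'0]
      simp


/-- If `A₁` is a unipotent `ℤ^p`-action on `ℚ^{q₁}`, `A₂` a `ℤ^p`-action on
`ℚ^{q₂}` whose only common fixed vector is `0`, and `V` a 1-cocycle over `(A₁, A₂)`, then
`V` is a coboundary: there is `W₀` with `V(ℓ) = W₀∘A₁(ℓ) − A₂(ℓ)∘W₀` for all `ℓ`. -/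
theorem stmt7 (p q₁ q₂ : ℕ)
    (A₁ : (Fin p → ℤ) → Module.End ℚ (Fin q₁ → ℚ))
    (A₂ : (Fin p → ℤ) → Module.End ℚ (Fin q₂ → ℚ))
    (hA₁ : ∀ ℓ ℓ', A₁ (ℓ + ℓ') = A₁ ℓ * A₁ ℓ') (hA₁0 : A₁ 0 = 1)
    (hA₂ : ∀ ℓ ℓ', A₂ (ℓ + ℓ') = A₂ ℓ * A₂ ℓ') (hA₂0 : A₂ 0 = 1)
    (huni : ∀ ℓ, IsNilpotent (A₁ ℓ - 1))
    (hfix : ∀ v : Fin q₂ → ℚ, (∀ ℓ, A₂ ℓ v = v) → v = 0)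
    (V : (Fin p → ℤ) → ((Fin q₁ → ℚ) →ₗ[ℚ] (Fin q₂ → ℚ)))
    (hV : ∀ ℓ ℓ', V (ℓ + ℓ') = V ℓ ∘ₗ (A₁ ℓ' : (Fin q₁ → ℚ) →ₗ[ℚ] (Fin q₁ → ℚ))
        + (A₂ ℓ : (Fin q₂ → ℚ) →ₗ[ℚ] (Fin q₂ → ℚ)) ∘ₗ V ℓ') :
    ∃ W₀ : (Fin q₁ → ℚ) →ₗ[ℚ] (Fin q₂ → ℚ),
      ∀ ℓ, V ℓ = W₀ ∘ₗ (A₁ ℓ : (Fin q₁ → ℚ) →ₗ[ℚ] (Fin q₁ → ℚ))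
        - (A₂ ℓ : (Fin q₂ → ℚ) →ₗ[ℚ] (Fin q₂ → ℚ)) ∘ₗ W₀ := by
  classical
  have hA₁c : ∀ ℓ ℓ', A₁ ℓ * A₁ ℓ' = A₁ ℓ' * A₁ ℓ := by
    intro ℓ ℓ'; rw [← hA₁, ← hA₁, add_comm]
  have hA₂c : ∀ ℓ ℓ', A₂ ℓ * A₂ ℓ' = A₂ ℓ' * A₂ ℓ := by
    intro ℓ ℓ'; rw [← hA₂, ← hA₂, add_comm]
  have hV0 : V 0 = 0 := by
    have h := hV 0 0
    rw [add_zero, hA₁0, hA₂0, Module.End.one_eq_id, LinearMap.comp_id, Module.End.one_eq_id,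
      LinearMap.id_comp] at h
    exact left_eq_add.mp h
  set e : Fin p → (Fin p → ℤ) := fun i => Pi.single i 1 with he
  set D : Fin p → Module.End ℚ ((Fin q₁ → ℚ) →ₗ[ℚ] (Fin q₂ → ℚ)) := fun i =>
    (LinearMap.lcomp ℚ (Fin q₂ → ℚ) (A₁ (e i) : (Fin q₁ → ℚ) →ₗ[ℚ] (Fin q₁ → ℚ)))
      - (LinearMap.llcomp ℚ (Fin q₁ → ℚ) (Fin q₂ → ℚ) (Fin q₂ → ℚ)
          (A₂ (e i) : (Fin q₂ → ℚ) →ₗ[ℚ] (Fin q₂ → ℚ))) with hD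
  have hDapp : ∀ (i) (W : (Fin q₁ → ℚ) →ₗ[ℚ] (Fin q₂ → ℚ)),
      D i W = W ∘ₗ (A₁ (e i) : (Fin q₁ → ℚ) →ₗ[ℚ] (Fin q₁ → ℚ))
        - (A₂ (e i) : (Fin q₂ → ℚ) →ₗ[ℚ] (Fin q₂ → ℚ)) ∘ₗ W := by
    intro i W
    rw [hD]
    simp [LinearMap.lcomp_apply', LinearMap.llcomp_apply']
  have hDcomm : ∀ i j, D i * D j = D j * D i := by
    intro i j
    refine LinearMap.ext fun W => ?_
    refine LinearMap.ext fun x => ?_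
    simp only [Module.End.mul_apply, hDapp, LinearMap.sub_apply, LinearMap.comp_apply, map_sub]
    have h1 : A₁ (e i) ((A₁ (e j)) x) = A₁ (e j) ((A₁ (e i)) x) := by
      have := LinearMap.congr_fun (hA₁c (e i) (e j)) x
      simpa [Module.End.mul_apply] using this
    have h2 : ∀ y, A₂ (e i) ((A₂ (e j)) y) = A₂ (e j) ((A₂ (e i)) y) := by
      intro y
      have := LinearMap.congr_fun (hA₂c (e i) (e j)) y
      simpa [Module.End.mul_apply] using this
    rw [h1, h2]
    abel
  -- the joint kernel of the D i is trivial
  have hgfix : ∀ y : Fin q₂ → ℚ, (∀ i, A₂ (e i) y = y) → y = 0 := by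
    intro y hy
    apply hfix
    apply gen_prop (fun ℓ => A₂ ℓ y = y)
    · rw [hA₂0]; rfl
    · intro ℓ ℓ' h h'
      rw [hA₂ ℓ ℓ', Module.End.mul_apply, h', h]
    · intro ℓ h
      have : A₂ (-ℓ) (A₂ ℓ y) = y := by
        rw [← Module.End.mul_apply, ← hA₂, neg_add_cancel, hA₂0]; rfl
      rwa [h] at this
    · exact hy
  have hDker : ∀ W : (Fin q₁ → ℚ) →ₗ[ℚ] (Fin q₂ → ℚ), (∀ i, D i W = 0) → W = 0 := by
    intro W hW0
    refine intertwiner_zero (Module.finrank ℚ (Fin q₁ → ℚ)) (Fin q₁ → ℚ) le_rfl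
      (fun i => A₂ (e i)) hgfix (fun i => A₁ (e i)) (fun i j => hA₁c (e i) (e j))
      (fun i => huni (e i)) W ?_
    intro i
    have := hW0 i
    rw [hDapp] at this
    exact sub_eq_zero.mp this
  set c : Fin p → ((Fin q₁ → ℚ) →ₗ[ℚ] (Fin q₂ → ℚ)) := fun i => V (e i) with hc
  have hcrel : ∀ i j, D i (c j) = D j (c i) := by
    intro i j
    have h1 := hV (e i) (e j)
    have h2 := hV (e j) (e i)
    rw [add_comm (e j) (e i)] at h2
    rw [hDapp, hDapp]
    rw [sub_eq_sub_iff_add_eq_add]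
    rw [hc]
    simp only
    rw [← h2, ← h1]
  obtain ⟨w, hw⟩ := koszul1 (Module.finrank ℚ ((Fin q₁ → ℚ) →ₗ[ℚ] (Fin q₂ → ℚ)))
    ((Fin q₁ → ℚ) →ₗ[ℚ] (Fin q₂ → ℚ)) le_rfl D hDcomm hDker c hcrel
  refine ⟨w, ?_⟩
  apply gen_prop (fun ℓ => V ℓ = w ∘ₗ (A₁ ℓ : (Fin q₁ → ℚ) →ₗ[ℚ] (Fin q₁ → ℚ))
    - (A₂ ℓ : (Fin q₂ → ℚ) →ₗ[ℚ] (Fin q₂ → ℚ)) ∘ₗ w)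
  · rw [hV0, hA₁0, hA₂0, Module.End.one_eq_id, LinearMap.comp_id, Module.End.one_eq_id,
      LinearMap.id_comp, sub_self]
  · intro ℓ ℓ' h h'
    rw [hV ℓ ℓ', h, h', hA₁ ℓ ℓ', hA₂ ℓ ℓ']
    simp only [LinearMap.sub_comp, LinearMap.comp_sub, Module.End.mul_eq_comp,
      LinearMap.comp_assoc]
    abel
  · intro ℓ h
    have hinv1 : (A₁ ℓ : (Fin q₁ → ℚ) →ₗ[ℚ] (Fin q₁ → ℚ)) ∘ₗ (A₁ (-ℓ) : (Fin q₁ → ℚ) →ₗ[ℚ] (Fin q₁ → ℚ)) = LinearMap.id := by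
      rw [← Module.End.mul_eq_comp, ← hA₁, add_neg_cancel, hA₁0, Module.End.one_eq_id]
    have hinv2 : (A₂ (-ℓ) : (Fin q₂ → ℚ) →ₗ[ℚ] (Fin q₂ → ℚ)) ∘ₗ (A₂ ℓ : (Fin q₂ → ℚ) →ₗ[ℚ] (Fin q₂ → ℚ)) = LinearMap.id := by
      rw [← Module.End.mul_eq_comp, ← hA₂, neg_add_cancel, hA₂0, Module.End.one_eq_id]
    have h0 := hV ℓ (-ℓ)
    rw [add_neg_cancel, hV0] at h0
    have hVneg : (A₂ ℓ : (Fin q₂ → ℚ) →ₗ[ℚ] (Fin q₂ → ℚ)) ∘ₗ V (-ℓ)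
        = -(V ℓ ∘ₗ (A₁ (-ℓ) : (Fin q₁ → ℚ) →ₗ[ℚ] (Fin q₁ → ℚ))) := by
      rw [eq_neg_iff_add_eq_zero, add_comm, ← h0]
    calc V (-ℓ) = (A₂ (-ℓ) : (Fin q₂ → ℚ) →ₗ[ℚ] (Fin q₂ → ℚ)) ∘ₗ
          ((A₂ ℓ : (Fin q₂ → ℚ) →ₗ[ℚ] (Fin q₂ → ℚ)) ∘ₗ V (-ℓ)) := by
          rw [← LinearMap.comp_assoc, hinv2, LinearMap.id_comp]
      _ = (A₂ (-ℓ) : (Fin q₂ → ℚ) →ₗ[ℚ] (Fin q₂ → ℚ)) ∘ₗ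
          (-(V ℓ ∘ₗ (A₁ (-ℓ) : (Fin q₁ → ℚ) →ₗ[ℚ] (Fin q₁ → ℚ)))) := by rw [hVneg]
      _ = -((A₂ (-ℓ) : (Fin q₂ → ℚ) →ₗ[ℚ] (Fin q₂ → ℚ)) ∘ₗ
          ((w ∘ₗ (A₁ ℓ : (Fin q₁ → ℚ) →ₗ[ℚ] (Fin q₁ → ℚ))
            - (A₂ ℓ : (Fin q₂ → ℚ) →ₗ[ℚ] (Fin q₂ → ℚ)) ∘ₗ w)
              ∘ₗ (A₁ (-ℓ) : (Fin q₁ → ℚ) →ₗ[ℚ] (Fin q₁ → ℚ)))) := by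
          rw [LinearMap.comp_neg, ← h]
      _ = w ∘ₗ (A₁ (-ℓ) : (Fin q₁ → ℚ) →ₗ[ℚ] (Fin q₁ → ℚ))
          - (A₂ (-ℓ) : (Fin q₂ → ℚ) →ₗ[ℚ] (Fin q₂ → ℚ)) ∘ₗ w := by
          rw [LinearMap.sub_comp, LinearMap.comp_assoc, hinv1, LinearMap.comp_id,
            LinearMap.comp_sub]
          rw [neg_sub]
          congr 1
          rw [← LinearMap.comp_assoc, ← LinearMap.comp_assoc, hinv2, LinearMap.id_comp]
  · intro i
    have := hw i
    rw [hDapp] at this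
    rw [hc] at this
    exact this
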